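/- Let f : X̃ → X be a harmonic morphism of finite graphs with X connected, and define f^* : ℤ^{V(X)} → ℤ^{V(X̃)} by f^*(v) = Σ_{ṽ ∈ f^{-1}(v)} d_f(ṽ)·ṽ. Then f^*(L_X(v)) = Σ_{ṽ ∈ f^{-1}(v)} L_{X̃}(ṽ) for every v ∈ V(X), and the composition f_* ∘ f^* acts on Jac(X) by multiplication by deg(f). -/

import Mathlib

open Finset

/-- Connectivity of a graph presented by half-edges: root map `r` and involution `ι`. -/
def HalfConn {V H : Type*} (r : H → V) (ι : H → H) : Prop :=
  ∀ u v : V, Relation.ReflTransGen (fun a b => ∃ h, r h = a ∧ r (ι h) = b) u v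

/-- The (half-edge) Laplacian matrix of a graph: the `(u,v)` entry is the coefficient of
`u` in `L(v) = Σ_{h ∈ T_v X} (v - r(ι h))`. -/
def halfLapMat {V H : Type*} [Fintype H] [DecidableEq V]
    (r : H → V) (ι : H → H) : Matrix V V ℤ :=
  Matrix.of fun u v => ∑ h : H,
    if r h = v then (if r h = u then 1 else 0) - (if r (ι h) = u then 1 else 0) else 0

/-- Degree (sum of coefficients) of a divisor, as a linear map. -/
def degHom (V : Type*) [Fintype V] : (V → ℤ) →ₗ[ℤ] ℤ where
  toFun d := ∑ v, d v
  map_add' x y := Finset.sum_add_distrib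
  map_smul' c x := by simp [Finset.mul_sum]

/-- Jacobian: degree-zero divisors modulo the image of (the linear map given by) `M`. -/
abbrev jacOfMat {V : Type*} [Fintype V] (M : Matrix V V ℤ) :=
  LinearMap.ker (degHom V) ⧸
    Submodule.comap (LinearMap.ker (degHom V)).subtype (LinearMap.range M.mulVecLin)

/-- Pushforward of divisors along a map of vertex sets: add up the chips in each fiber. -/
def pushV {V W : Type*} [Fintype V] [DecidableEq W] (p : V → W) (d : V → ℤ) : W → ℤ :=
  fun w => ∑ v ∈ Finset.univ.filter (fun v => p v = w), d v

/-- The divisor consisting of a single chip at `v`. -/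
def indic {α : Type*} [DecidableEq α] (v : α) : α → ℤ := fun u => if u = v then 1 else 0

/-- for a harmonic morphism `f : X̃ → X` with `X` connected,
`f^*(L_X(v)) = Σ_{vt ∈ f⁻¹(v)} L_{X̃}(vt)` for every vertex `v` of `X`, and the
composition `f_* ∘ f^*` is multiplication by the global degree `deg(f)` (hence acts on
`Jac(X)` as multiplication by `deg(f)`).  Here `f^*(D)(vt) = d_f(vt)·D(f(vt))`. -/
theorem stmt12 {V1 H1 V2 H2 : Type*} [Fintype V1] [Fintype H1] [Fintype V2] [Fintype H2]
    [DecidableEq V1] [DecidableEq V2] [DecidableEq H1] [DecidableEq H2]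
    (r1 : H1 → V1) (ι1 : H1 → H1) (hι1 : ∀ h, ι1 (ι1 h) = h)
    (r2 : H2 → V2) (ι2 : H2 → H2) (hι2 : ∀ h, ι2 (ι2 h) = h)
    (fV : V1 → V2) (fH : H1 → H2)
    (hr : ∀ h, fV (r1 h) = r2 (fH h)) (hι : ∀ h, fH (ι1 h) = ι2 (fH h))
    (d : V1 → ℤ)
    (harm : ∀ (vt : V1) (h : H2), r2 h = fV vt →
      d vt = ((Finset.univ.filter (fun h' => r1 h' = vt ∧ fH h' = h)).card : ℤ))
    (hconn : HalfConn r2 ι2)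
    (Deg : ℤ) (hDeg : ∀ v : V2, ∑ vt ∈ Finset.univ.filter (fun vt => fV vt = v), d vt = Deg) :
    (∀ v : V2,
        (fun vt : V1 => d vt * ((halfLapMat r2 ι2).mulVec (indic v)) (fV vt)) =
          fun u : V1 => ∑ vt ∈ Finset.univ.filter (fun vt => fV vt = v),
            ((halfLapMat r1 ι1).mulVec (indic vt)) u) ∧
    (∀ D : V2 → ℤ,
        pushV fV (fun vt : V1 => d vt * D (fV vt)) = Deg • D) := by
  constructor
  · -- pullback commutes with Laplacians
    have mv2 : ∀ (u v : V2), (halfLapMat r2 ι2).mulVec (indic v) u =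
        ∑ h : H2, if r2 h = v then
          ((if r2 h = u then (1:ℤ) else 0) - (if r2 (ι2 h) = u then 1 else 0)) else 0 := by
      intro u v
      simp [Matrix.mulVec, dotProduct, indic, halfLapMat, mul_ite]
    have mv1 : ∀ (u : V1) (v : V1), (halfLapMat r1 ι1).mulVec (indic v) u =
        ∑ h : H1, if r1 h = v then
          ((if r1 h = u then (1:ℤ) else 0) - (if r1 (ι1 h) = u then 1 else 0)) else 0 := by
      intro u v
      simp [Matrix.mulVec, dotProduct, indic, halfLapMat, mul_ite]
    -- fiber count over a half-edge
    have count : ∀ (h2 : H2) (u : V1),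
        (∑ h1 : H1, if r1 h1 = u ∧ fH h1 = h2 then (1:ℤ) else 0) =
          if r2 h2 = fV u then d u else 0 := by
      intro h2 u
      by_cases hc : r2 h2 = fV u
      · rw [if_pos hc, harm u h2 hc, Finset.sum_boole]
      · rw [if_neg hc]
        refine Finset.sum_eq_zero fun h1 _ => ?_
        rw [if_neg]
        rintro ⟨h1r, h1f⟩
        exact hc (by rw [← h1f, ← hr, h1r])
    have key : ∀ (g : H2 → H2) (v : V2) (u : V1),
        (∑ h1 : H1, if r2 (g (fH h1)) = v ∧ r1 h1 = u then (1:ℤ) else 0) =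
          d u * ∑ h2 : H2, if r2 (g h2) = v ∧ r2 h2 = fV u then 1 else 0 := by
      intro g v u
      calc (∑ h1 : H1, if r2 (g (fH h1)) = v ∧ r1 h1 = u then (1:ℤ) else 0)
          = ∑ h1 : H1, ∑ h2 : H2, if fH h1 = h2 then
              (if r2 (g h2) = v ∧ r1 h1 = u then (1:ℤ) else 0) else 0 := by
            refine Finset.sum_congr rfl fun h1 _ => ?_
            rw [Finset.sum_ite_eq Finset.univ (fH h1)
              (fun h2 => if r2 (g h2) = v ∧ r1 h1 = u then (1:ℤ) else 0),
              if_pos (Finset.mem_univ _)]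
        _ = ∑ h2 : H2, ∑ h1 : H1, if fH h1 = h2 then
              (if r2 (g h2) = v ∧ r1 h1 = u then (1:ℤ) else 0) else 0 := Finset.sum_comm
        _ = ∑ h2 : H2, if r2 (g h2) = v then
              (∑ h1 : H1, if r1 h1 = u ∧ fH h1 = h2 then (1:ℤ) else 0) else 0 := by
            refine Finset.sum_congr rfl fun h2 _ => ?_
            by_cases hg : r2 (g h2) = v
            · rw [if_pos hg]
              refine Finset.sum_congr rfl fun h1 _ => ?_
              by_cases hf : fH h1 = h2
              · by_cases hu : r1 h1 = u <;> simp [hf, hg, hu]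
              · simp [hf]
            · rw [if_neg hg]
              refine Finset.sum_eq_zero fun h1 _ => ?_
              by_cases hf : fH h1 = h2 <;> simp [hf, hg]
        _ = ∑ h2 : H2, if r2 (g h2) = v then (if r2 h2 = fV u then d u else 0) else 0 := by
            refine Finset.sum_congr rfl fun h2 _ => ?_
            rw [count]
        _ = d u * ∑ h2 : H2, if r2 (g h2) = v ∧ r2 h2 = fV u then 1 else 0 := by
            rw [Finset.mul_sum]
            refine Finset.sum_congr rfl fun h2 _ => ?_
            by_cases hg : r2 (g h2) = v <;> by_cases hu : r2 h2 = fV u <;>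
              simp [hg, hu]
    intro v
    funext u
    rw [mv2]
    -- rewrite the RHS as a single sum over H1
    have rhs_eq :
        (∑ vt ∈ Finset.univ.filter (fun vt => fV vt = v),
            ((halfLapMat r1 ι1).mulVec (indic vt)) u) =
          ∑ h1 : H1, if r2 (fH h1) = v then
            ((if r1 h1 = u then (1:ℤ) else 0) - (if r1 (ι1 h1) = u then 1 else 0)) else 0 := by
      calc (∑ vt ∈ Finset.univ.filter (fun vt => fV vt = v),
              ((halfLapMat r1 ι1).mulVec (indic vt)) u)
          = ∑ vt ∈ Finset.univ.filter (fun vt => fV vt = v), ∑ h1 : H1,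
              if r1 h1 = vt then
                ((if r1 h1 = u then (1:ℤ) else 0) - (if r1 (ι1 h1) = u then 1 else 0)) else 0 := by
            exact Finset.sum_congr rfl fun vt _ => mv1 u vt
        _ = ∑ h1 : H1, ∑ vt ∈ Finset.univ.filter (fun vt => fV vt = v),
              if r1 h1 = vt then
                ((if r1 h1 = u then (1:ℤ) else 0) - (if r1 (ι1 h1) = u then 1 else 0)) else 0 :=
            Finset.sum_comm
        _ = ∑ h1 : H1, if r2 (fH h1) = v then
              ((if r1 h1 = u then (1:ℤ) else 0) - (if r1 (ι1 h1) = u then 1 else 0)) else 0 := by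
            refine Finset.sum_congr rfl fun h1 _ => ?_
            rw [Finset.sum_ite_eq
              (Finset.univ.filter (fun vt => fV vt = v)) (r1 h1)
              (fun _ => (if r1 h1 = u then (1:ℤ) else 0) - (if r1 (ι1 h1) = u then 1 else 0))]
            simp [hr h1]
    rw [rhs_eq]
    have split1 : (∑ h1 : H1, if r2 (fH h1) = v then
          ((if r1 h1 = u then (1:ℤ) else 0) - (if r1 (ι1 h1) = u then 1 else 0)) else 0) =
        (∑ h1 : H1, if r2 (fH h1) = v ∧ r1 h1 = u then (1:ℤ) else 0) -
        (∑ h1 : H1, if r2 (fH h1) = v ∧ r1 (ι1 h1) = u then (1:ℤ) else 0) := by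
      rw [← Finset.sum_sub_distrib]
      refine Finset.sum_congr rfl fun h1 _ => ?_
      by_cases h1' : r2 (fH h1) = v <;> by_cases h2' : r1 h1 = u <;>
        by_cases h3' : r1 (ι1 h1) = u <;> simp [h1', h2', h3']
    have reB : (∑ h1 : H1, if r2 (fH h1) = v ∧ r1 (ι1 h1) = u then (1:ℤ) else 0) =
        ∑ h1 : H1, if r2 (ι2 (fH h1)) = v ∧ r1 h1 = u then (1:ℤ) else 0 := by
      rw [← Function.Bijective.sum_comp (Function.Involutive.toPerm ι1 hι1).bijective
        (fun h1 => if r2 (fH h1) = v ∧ r1 (ι1 h1) = u then (1:ℤ) else 0)]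
      refine Finset.sum_congr rfl fun h1 _ => ?_
      simp only [Function.Involutive.coe_toPerm, Function.Involutive.toPerm, Equiv.coe_fn_mk, hι, hι1]
    have keyA := key id v u
    simp only [id_eq] at keyA
    rw [split1, reB, keyA, key ι2 v u]
    have reB2 : (∑ h2 : H2, if r2 (ι2 h2) = v ∧ r2 h2 = fV u then (1:ℤ) else 0) =
        ∑ h2 : H2, if r2 h2 = v ∧ r2 (ι2 h2) = fV u then (1:ℤ) else 0 := by
      rw [← Function.Bijective.sum_comp (Function.Involutive.toPerm ι2 hι2).bijective
        (fun h2 => if r2 (ι2 h2) = v ∧ r2 h2 = fV u then (1:ℤ) else 0)]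
      refine Finset.sum_congr rfl fun h2 _ => ?_
      simp only [Function.Involutive.coe_toPerm, Function.Involutive.toPerm, Equiv.coe_fn_mk, hι2, And.comm]
    rw [reB2, ← mul_sub, ← Finset.sum_sub_distrib]
    congr 1
    refine Finset.sum_congr rfl fun h2 _ => ?_
    by_cases h1' : r2 h2 = v <;> by_cases h2' : r2 h2 = fV u <;>
      by_cases h3' : r2 (ι2 h2) = fV u <;> simp [h1', h2', h3']
  · -- pushforward ∘ pullback is multiplication by Deg
    intro D
    funext w
    show (∑ vt ∈ Finset.univ.filter (fun vt => fV vt = w), d vt * D (fV vt)) = Deg • D w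
    rw [smul_eq_mul, ← hDeg w, Finset.sum_mul]
    refine Finset.sum_congr rfl fun vt hvt => ?_
    rw [(Finset.mem_filter.mp hvt).2]
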